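/- Let 0 < a and let u : [0,a] → ℝ be continuous, C² on [0,a), positive on [0,a) with u(a) = 0. Suppose v := u²/2 satisfies v ∈ C¹([0,a]), v'(a) < 0, and v(x)v''(x) → 0 as x → a. Then u'(x) → -∞ as x → a, lim_{x→a} u(x)u'(x) = v'(a) < 0, and lim_{x→a} u''(x)/u'(x)³ = -1/v'(a). -/

import Mathlib

open Set Filter Topology

/-- Lemma A.1 (iii) ⟹ (i): if `v := u²/2` is C¹ on `[0,a]` with `v'(a) < 0` and
`v v'' → 0` at `a`, then `u' → -∞` at `a`, `u u' → v'(a) < 0`, and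
`u''/u'³ → -1/v'(a)` as `x → a`. -/
theorem stmt2 (a : ℝ) (ha : 0 < a) (u : ℝ → ℝ)
    (hu_cont : ContinuousOn u (Icc 0 a))
    (hu_C2 : ContDiffOn ℝ 2 u (Ico 0 a))
    (hu_pos : ∀ x ∈ Ico (0:ℝ) a, 0 < u x)
    (hu_a : u a = 0)
    (hv_C1 : ContDiffOn ℝ 1 (fun x => u x ^ 2 / 2) (Icc 0 a))
    (hv'a : derivWithin (fun x => u x ^ 2 / 2) (Icc 0 a) a < 0)
    (hvv'' : Tendsto (fun x => (u x ^ 2 / 2) * deriv (deriv (fun y => u y ^ 2 / 2)) x)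
      (𝓝[<] a) (𝓝 0)) :
    Tendsto (deriv u) (𝓝[<] a) atBot ∧
    Tendsto (fun x => u x * deriv u x) (𝓝[<] a)
      (𝓝 (derivWithin (fun x => u x ^ 2 / 2) (Icc 0 a) a)) ∧
    Tendsto (fun x => deriv (deriv u) x / (deriv u x) ^ 3) (𝓝[<] a)
      (𝓝 (-1 / derivWithin (fun x => u x ^ 2 / 2) (Icc 0 a) a)) := by
  set V : ℝ → ℝ := fun x => u x ^ 2 / 2 with hV
  set c : ℝ := derivWithin V (Icc 0 a) a with hc
  have hUD : UniqueDiffOn ℝ (Icc (0:ℝ) a) := uniqueDiffOn_Icc ha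
  have haI : a ∈ Icc (0:ℝ) a := ⟨ha.le, le_rfl⟩
  have hIoo : ∀ᶠ x in 𝓝[<] a, x ∈ Ioo (0:ℝ) a :=
    Ioo_mem_nhdsLT_of_mem ⟨ha, le_rfl⟩
  have hle : 𝓝[<] a ≤ 𝓝[Icc (0:ℝ) a] a := by
    refine nhdsWithin_le_iff.2 ?_
    exact mem_of_superset hIoo (fun x hx => Ioo_subset_Icc_self hx)
  -- pointwise derivative facts on the open interval
  have key : ∀ x ∈ Ioo (0:ℝ) a,
      DifferentiableAt ℝ u x ∧ DifferentiableAt ℝ (deriv u) x ∧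
      derivWithin V (Icc 0 a) x = u x * deriv u x ∧
      deriv (deriv V) x = deriv u x ^ 2 + u x * deriv (deriv u) x := by
    have hC2 : ContDiffOn ℝ 2 u (Ioo 0 a) := hu_C2.mono Ioo_subset_Ico_self
    have hC1d : ContDiffOn ℝ 1 (deriv u) (Ioo 0 a) :=
      hC2.deriv_of_isOpen isOpen_Ioo (by norm_num)
    intro x hx
    have hmem : Ioo (0:ℝ) a ∈ 𝓝 x := isOpen_Ioo.mem_nhds hx
    have h1 : DifferentiableAt ℝ u x :=
      (hC2.contDiffAt hmem).differentiableAt two_ne_zero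
    have h2 : DifferentiableAt ℝ (deriv u) x :=
      (hC1d.contDiffAt hmem).differentiableAt one_ne_zero
    have hdV : ∀ y ∈ Ioo (0:ℝ) a, deriv V y = u y * deriv u y := by
      intro y hy
      have hy1 : DifferentiableAt ℝ u y :=
        (hC2.contDiffAt (isOpen_Ioo.mem_nhds hy)).differentiableAt two_ne_zero
      have h := ((hy1.hasDerivAt.fun_pow 2).div_const 2).deriv
      rw [hV, h]
      push_cast
      ring
    have hdV' : derivWithin V (Icc 0 a) x = deriv V x :=
      derivWithin_of_mem_nhds (mem_of_superset hmem Ioo_subset_Icc_self)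
    have heq : deriv V =ᶠ[𝓝 x] fun y => u y * deriv u y :=
      Filter.eventuallyEq_of_mem hmem hdV
    have hdd : deriv (deriv V) x = deriv u x ^ 2 + u x * deriv (deriv u) x := by
      rw [heq.deriv_eq, (h1.hasDerivAt.fun_mul h2.hasDerivAt).deriv]
      ring
    exact ⟨h1, h2, by rw [hdV', hdV x hx], hdd⟩
  -- continuity of the derivative of V up to a
  have hVdcont : ContinuousOn (derivWithin V (Icc 0 a)) (Icc 0 a) :=
    hv_C1.continuousOn_derivWithin hUD le_rfl
  have htV' : Tendsto (derivWithin V (Icc 0 a)) (𝓝[<] a) (𝓝 c) :=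
    Filter.Tendsto.mono_left (hVdcont a haI) hle
  have huv : Tendsto (fun x => u x * deriv u x) (𝓝[<] a) (𝓝 c) :=
    Filter.Tendsto.congr' (hIoo.mono fun x hx => (key x hx).2.2.1) htV'
  -- u tends to 0 from the right
  have hu0 : Tendsto u (𝓝[<] a) (𝓝 0) := by
    have h := Filter.Tendsto.mono_left (hu_cont a haI) hle
    rwa [hu_a] at h
  have hupos : ∀ᶠ x in 𝓝[<] a, 0 < u x :=
    hIoo.mono fun x hx => hu_pos x ⟨hx.1.le, hx.2⟩
  have hu0' : Tendsto u (𝓝[<] a) (𝓝[>] 0) :=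
    tendsto_nhdsWithin_iff.2 ⟨hu0, hupos⟩
  have hinv : Tendsto (fun x => (u x)⁻¹) (𝓝[<] a) atTop :=
    hu0'.inv_tendsto_nhdsGT_zero
  -- part 1
  have hderiv_bot : Tendsto (deriv u) (𝓝[<] a) atBot := by
    have h := huv.neg_mul_atTop hv'a hinv
    refine Filter.Tendsto.congr' ?_ h
    filter_upwards [hupos] with x hx
    rw [mul_comm (u x), mul_assoc, mul_inv_cancel₀ hx.ne', mul_one]
  -- eventually u x * deriv u x < 0
  have hneg : ∀ᶠ x in 𝓝[<] a, u x * deriv u x < 0 :=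
    huv.eventually (eventually_lt_nhds hv'a)
  refine ⟨hderiv_bot, huv, ?_⟩
  -- part 3
  have hc0 : c ≠ 0 := ne_of_lt hv'a
  have hc3 : c ^ 3 ≠ 0 := pow_ne_zero 3 hc0
  have htail : Tendsto (fun x => V x * deriv (deriv V) x) (𝓝[<] a) (𝓝 0) := hvv''
  have hg : Tendsto (fun x => (V x * deriv (deriv V) x) * (2 / (u x * deriv u x) ^ 3)
      - 1 / (u x * deriv u x)) (𝓝[<] a) (𝓝 (0 * (2 / c ^ 3) - 1 / c)) :=
    (htail.mul (tendsto_const_nhds.div (huv.pow 3) hc3)).sub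
      (tendsto_const_nhds.div huv hc0)
  have h0 : (0 : ℝ) * (2 / c ^ 3) - 1 / c = -1 / c := by ring
  rw [h0] at hg
  refine Filter.Tendsto.congr' ?_ hg
  filter_upwards [hIoo, hneg] with x hx hxneg
  obtain ⟨h1, h2, h4, h5⟩ := key x hx
  have hu_ne : u x ≠ 0 := (hu_pos x ⟨hx.1.le, hx.2⟩).ne'
  have hd_ne : deriv u x ≠ 0 := by
    intro h
    rw [h, mul_zero] at hxneg
    exact lt_irrefl 0 hxneg
  have hVx : V x = u x ^ 2 / 2 := rfl
  rw [hVx, h5]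
  field_simp
  ring
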